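/- Let E be a real Banach space, T > 0, 0 < α₀ < 1, and 0 < t₁ ≤ T. Let u : (0,t₁] → E be continuously differentiable with ‖u'(θ)‖ ≤ C_u θ^{α₀−1} for all θ ∈ (0,t₁], and let k̃ : (0,T] → ℝ be measurable with |k̃(t)| ≤ C_k t^{−α₀}(1 + |ln t|) for all t ∈ (0,T]. Then there is a constant C, depending only on C_u, C_k, α₀ and T, such that ‖ ∫_0^{t₁} k̃(t₁ − s) ( ∫_{t₁}^{s} u'(θ) dθ ) ds ‖ ≤ C t₁ (1 + |ln t₁|). -/

import Mathlib

open MeasureTheory intervalIntegral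

lemma aux_rpow_sub_le {x y p : ℝ} (hy : 0 ≤ y) (hxy : y ≤ x) (hp0 : 0 ≤ p) (hp1 : p ≤ 1) :
    x ^ p - y ^ p ≤ (x - y) ^ p := by
  have hxy' : 0 ≤ x - y := by linarith
  have h := NNReal.rpow_add_le_add_rpow (x - y).toNNReal y.toNNReal hp0 hp1
  have h' := NNReal.coe_le_coe.2 h
  rw [← Real.toNNReal_add hxy' hy, sub_add_cancel] at h'
  push_cast [NNReal.coe_rpow, Real.coe_toNNReal x (hy.trans hxy),
    Real.coe_toNNReal y hy, Real.coe_toNNReal _ hxy'] at h'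
  linarith

lemma aux_log_intervalIntegrable {b : ℝ} (hb : 0 < b) :
    IntervalIntegrable Real.log volume 0 b := by
  rw [intervalIntegrable_iff_integrableOn_Ioc_of_le hb.le]
  have hmaj : IntegrableOn (fun x : ℝ => 2 * x ^ (-(1/2) : ℝ) + |Real.log b|)
      (Set.Ioc 0 b) := by
    apply Integrable.add
    · have h := intervalIntegral.intervalIntegrable_rpow'
        (a := 0) (b := b) (r := -(1/2)) (by norm_num)
      rw [intervalIntegrable_iff_integrableOn_Ioc_of_le hb.le] at h
      exact h.const_mul 2
    · exact integrableOn_const measure_Ioc_lt_top.ne enorm_ne_top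
  refine hmaj.integrable.mono' Real.measurable_log.aestronglyMeasurable ?_
  refine (ae_restrict_iff' measurableSet_Ioc).2 (Filter.Eventually.of_forall ?_)
  intro x hx
  have hx0 : 0 < x := hx.1
  have f1 : -Real.log x ≤ 2 * x ^ (-(1/2) : ℝ) := by
    have hinv : 0 < x⁻¹ := inv_pos.2 hx0
    have h2 : Real.log (x⁻¹ ^ ((1:ℝ)/2)) ≤ x⁻¹ ^ ((1:ℝ)/2) := by
      have h := Real.log_le_sub_one_of_pos (x := x⁻¹ ^ ((1:ℝ)/2))
        (Real.rpow_pos_of_pos hinv _)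
      linarith
    have h3 : Real.log (x⁻¹ ^ ((1:ℝ)/2)) = (1/2) * Real.log x⁻¹ := Real.log_rpow hinv _
    have h4 : x⁻¹ ^ ((1:ℝ)/2) = x ^ (-(1/2) : ℝ) := by
      rw [Real.inv_rpow hx0.le, ← Real.rpow_neg hx0.le]
    rw [Real.log_inv] at h3
    rw [h4] at h2 h3
    linarith
  have f2 : Real.log x ≤ |Real.log b| :=
    (Real.log_le_log hx0 hx.2).trans (le_abs_self _)
  have f3 : (0:ℝ) ≤ 2 * x ^ (-(1/2) : ℝ) := by positivity
  have f4 : (0:ℝ) ≤ |Real.log b| := abs_nonneg _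
  rw [Real.norm_eq_abs]
  exact abs_le.2 ⟨by linarith, by linarith⟩

lemma aux_integral_log {b : ℝ} (hb : 0 < b) :
    ∫ x in (0:ℝ)..b, Real.log x = b * Real.log b - b := by
  have h := intervalIntegral.integral_eq_sub_of_hasDeriv_right_of_le
    (f := fun x => x * Real.log x - x) (f' := Real.log) hb.le
    ((Real.continuous_mul_log.sub continuous_id).continuousOn)
    (fun x hx => by
      have : HasDerivAt (fun x : ℝ => x * Real.log x - x) (Real.log x) x := by
        have h1 := (Real.hasDerivAt_mul_log (ne_of_gt hx.1)).sub (hasDerivAt_id x)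
        exact h1.congr_deriv (by ring)
      exact this.hasDerivWithinAt)
    (aux_log_intervalIntegrable hb)
  simpa [Real.log_zero] using h

theorem stmt_10 (T α₀ Cu Ck : ℝ) (hT : 0 < T) (h0 : 0 < α₀) (h1 : α₀ < 1) :
    ∃ C > 0, ∀ (E : Type) [NormedAddCommGroup E] [NormedSpace ℝ E] [CompleteSpace E],
      ∀ t₁ : ℝ, 0 < t₁ → t₁ ≤ T →
      ∀ (u u' : ℝ → E) (k : ℝ → ℝ),
        (∀ θ ∈ Set.Ioc (0:ℝ) t₁, HasDerivAt u (u' θ) θ) →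
        ContinuousOn u' (Set.Ioc 0 t₁) →
        (∀ θ ∈ Set.Ioc (0:ℝ) t₁, ‖u' θ‖ ≤ Cu * θ ^ (α₀ - 1)) →
        Measurable k →
        (∀ s ∈ Set.Ioc (0:ℝ) T, |k s| ≤ Ck * s ^ (-α₀) * (1 + |Real.log s|)) →
        ‖∫ s in (0:ℝ)..t₁, k (t₁ - s) • (∫ θ in t₁..s, u' θ)‖ ≤
          C * t₁ * (1 + |Real.log t₁|) := by
  set Cu' := max Cu 0 with hCu'
  set Ck' := max Ck 0 with hCk'
  have hCu'0 : 0 ≤ Cu' := le_max_right _ _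
  have hCk'0 : 0 ≤ Ck' := le_max_right _ _
  set K := Cu' * Ck' / α₀ with hK
  have hK0 : 0 ≤ K := by positivity
  refine ⟨2 * K + 1, by positivity, ?_⟩
  intro E _ _ _ t₁ ht₁ ht₁T u u' k hu hu'c hu'b hk hkb
  set A := 1 + |Real.log t₁| + Real.log t₁ with hA
  have hA0 : 0 ≤ A := by
    have := neg_abs_le (Real.log t₁); rw [hA]; linarith
  have hcompII : IntervalIntegrable (fun s => Real.log (t₁ - s)) volume 0 t₁ := by
    have h := ((aux_log_intervalIntegrable ht₁).comp_sub_left t₁).symm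
    simpa using h
  have hGII : IntervalIntegrable (fun s => K * (A - Real.log (t₁ - s))) volume 0 t₁ :=
    ((_root_.intervalIntegrable_const).sub hcompII).const_mul K
  have hmain : ‖∫ s in (0:ℝ)..t₁, k (t₁ - s) • (∫ θ in t₁..s, u' θ)‖ ≤
      |∫ s in (0:ℝ)..t₁, K * (A - Real.log (t₁ - s))| := by
    apply intervalIntegral.norm_integral_le_abs_of_norm_le ?_ hGII
    rw [Set.uIoc_of_le ht₁.le]
    refine (ae_restrict_iff' measurableSet_Ioc).2 (Filter.Eventually.of_forall ?_)
    intro s hs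
    rcases eq_or_lt_of_le hs.2 with heq | hlt
    · rw [heq]
      simp only [intervalIntegral.integral_same, smul_zero, norm_zero, sub_self,
        Real.log_zero, sub_zero]
      positivity
    · have hr0 : 0 < t₁ - s := by linarith
      have hrt : t₁ - s ≤ t₁ := by linarith [hs.1]
      have hrT : t₁ - s ≤ T := hrt.trans ht₁T
      -- inner integral bound
      have hinner : ‖∫ θ in t₁..s, u' θ‖ ≤ Cu' / α₀ * (t₁ - s) ^ α₀ := by
        rw [intervalIntegral.integral_symm, norm_neg]
        have hb1 : ‖∫ θ in s..t₁, u' θ‖ ≤ |∫ θ in s..t₁, Cu' * θ ^ (α₀ - 1)| := by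
          apply intervalIntegral.norm_integral_le_abs_of_norm_le
          · rw [Set.uIoc_of_le hlt.le]
            refine (ae_restrict_iff' measurableSet_Ioc).2 (Filter.Eventually.of_forall ?_)
            intro θ hθ
            have hθ0 : 0 < θ := hs.1.trans hθ.1
            refine (hu'b θ ⟨hθ0, hθ.2⟩).trans ?_
            exact mul_le_mul_of_nonneg_right (le_max_left _ _) (Real.rpow_nonneg hθ0.le _)
          · apply ContinuousOn.intervalIntegrable
            apply ContinuousOn.mul continuousOn_const
            apply ContinuousOn.rpow_const continuousOn_id
            intro x hx
            rw [Set.uIcc_of_le hlt.le] at hx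
            exact Or.inl (ne_of_gt (hs.1.trans_le hx.1))
        have hval : ∫ θ in s..t₁, Cu' * θ ^ (α₀ - 1) = Cu' * ((t₁ ^ α₀ - s ^ α₀) / α₀) := by
          rw [intervalIntegral.integral_const_mul, integral_rpow (Or.inl (by linarith))]
          have he : α₀ - 1 + 1 = α₀ := by ring
          rw [he]
        have hsub : t₁ ^ α₀ - s ^ α₀ ≤ (t₁ - s) ^ α₀ :=
          aux_rpow_sub_le hs.1.le hs.2 h0.le h1.le
        have hnn : 0 ≤ t₁ ^ α₀ - s ^ α₀ := by
          have := Real.rpow_le_rpow hs.1.le hs.2 h0.le; linarith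
        rw [hval] at hb1
        have habs : |Cu' * ((t₁ ^ α₀ - s ^ α₀) / α₀)| = Cu' * ((t₁ ^ α₀ - s ^ α₀) / α₀) := by
          apply abs_of_nonneg; positivity
        rw [habs] at hb1
        refine hb1.trans ?_
        rw [div_mul_eq_mul_div, mul_div_assoc]
        gcongr
      -- kernel bound
      have hkbound : |k (t₁ - s)| ≤ Ck' * (t₁ - s) ^ (-α₀) * (1 + |Real.log (t₁ - s)|) := by
        refine (hkb (t₁ - s) ⟨hr0, hrT⟩).trans ?_
        have hnn : 0 ≤ (t₁ - s) ^ (-α₀) * (1 + |Real.log (t₁ - s)|) := by positivity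
        have := mul_le_mul_of_nonneg_right (le_max_left Ck 0) hnn
        calc Ck * (t₁ - s) ^ (-α₀) * (1 + |Real.log (t₁ - s)|)
            = Ck * ((t₁ - s) ^ (-α₀) * (1 + |Real.log (t₁ - s)|)) := by ring
          _ ≤ Ck' * ((t₁ - s) ^ (-α₀) * (1 + |Real.log (t₁ - s)|)) := this
          _ = Ck' * (t₁ - s) ^ (-α₀) * (1 + |Real.log (t₁ - s)|) := by ring
      have hlogb : 1 + |Real.log (t₁ - s)| ≤ A - Real.log (t₁ - s) := by
        have h1' : Real.log (t₁ - s) ≤ Real.log t₁ := Real.log_le_log hr0 hrt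
        have h2' := le_abs_self (Real.log t₁)
        have h3' := neg_abs_le (Real.log t₁)
        have h4' : |Real.log (t₁ - s)| ≤ |Real.log t₁| + Real.log t₁ - Real.log (t₁ - s) :=
          abs_le.2 ⟨by linarith, by linarith⟩
        rw [hA]; linarith
      rw [norm_smul, Real.norm_eq_abs]
      have hrp : (0:ℝ) < (t₁ - s) ^ α₀ := Real.rpow_pos_of_pos hr0 _
      calc |k (t₁ - s)| * ‖∫ θ in t₁..s, u' θ‖
          ≤ (Ck' * (t₁ - s) ^ (-α₀) * (1 + |Real.log (t₁ - s)|)) *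
            (Cu' / α₀ * (t₁ - s) ^ α₀) :=
            mul_le_mul hkbound hinner (norm_nonneg _) (by positivity)
        _ = K * (1 + |Real.log (t₁ - s)|) := by
            rw [hK, Real.rpow_neg hr0.le]
            field_simp
        _ ≤ K * (A - Real.log (t₁ - s)) := mul_le_mul_of_nonneg_left hlogb hK0
  have hval2 : ∫ s in (0:ℝ)..t₁, K * (A - Real.log (t₁ - s)) =
      K * t₁ * (2 + |Real.log t₁|) := by
    rw [intervalIntegral.integral_const_mul,
      intervalIntegral.integral_sub _root_.intervalIntegrable_const hcompII,
      intervalIntegral.integral_const,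
      intervalIntegral.integral_comp_sub_left (fun x => Real.log x) t₁]
    simp only [sub_self, sub_zero]
    rw [aux_integral_log ht₁, hA]
    simp only [smul_eq_mul]
    ring
  rw [hval2] at hmain
  have habs2 : |K * t₁ * (2 + |Real.log t₁|)| = K * t₁ * (2 + |Real.log t₁|) := by
    apply abs_of_nonneg; positivity
  rw [habs2] at hmain
  refine hmain.trans ?_
  nlinarith [abs_nonneg (Real.log t₁), hK0, ht₁.le, mul_nonneg hK0 ht₁.le]
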